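/- Let X be a nonempty subset of Zar(F), and set A = ⋂_{V∈X} V and J(X) = ⋂_{V∈X} 𝔪_V. Then J(X) = 0 if and only if there exists a valuation ring U in the patch closure of X such that 𝔪_U ∩ A = 0. -/

import Mathlib

open Set

/-- A subring `V` of a field `F` is a valuation ring of `F` (with quotient field `F`). -/
def IsValSubring (F : Type*) [Field F] (V : Subring F) : Prop :=
  ∀ t : F, t ≠ 0 → t ∈ V ∨ t⁻¹ ∈ V

/-- The Zariski-Riemann space of the field `F`: the set of valuation rings of `F`. -/
def Zar (F : Type*) [Field F] : Type _ := {V : Subring F // IsValSubring F V}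

/-- The patch (constructible) topology on `Zar F`, generated by the sets
`{V : x ∈ V}` and `{V : y ∉ V}` for `x, y ∈ F`. -/
instance Zar.patchTopology (F : Type*) [Field F] : TopologicalSpace (Zar F) :=
  TopologicalSpace.generateFrom
    ({S | ∃ x : F, S = {V : Zar F | x ∈ V.1}} ∪ {S | ∃ y : F, S = {V : Zar F | y ∉ V.1}})

variable {F : Type*} [Field F]

/-- The maximal ideal of a valuation ring of `F`, as a subset of `F`. -/
def mIdeal (V : Zar F) : Set F := {x : F | x ∈ V.1 ∧ (x = 0 ∨ x⁻¹ ∉ V.1)}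

/-- `A(X)`: the intersection of the valuation rings in `X`, as a subset of `F`. -/
def aSet (X : Set (Zar F)) : Set F := ⋂ V ∈ X, ((V : Zar F).1 : Set F)

/-- `A(X)` as a subring of `F`. -/
def ASub (X : Set (Zar F)) : Subring F := ⨅ V ∈ X, (V : Zar F).1

/-- `J(X)`: the intersection of the maximal ideals of the valuation rings in `X`. -/
def jSet (X : Set (Zar F)) : Set F := ⋂ V ∈ X, mIdeal V

/-- The set of limit points of `X` in the patch topology of `Zar F`. -/
def limPts (X : Set (Zar F)) : Set (Zar F) :=
  {V : Zar F | ∀ U : Set (Zar F), IsOpen U → V ∈ U → ∃ W ∈ X, W ≠ V ∧ W ∈ U}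


-- generating set abbreviation
private def gens (F : Type*) [Field F] : Set (Set (Zar F)) :=
  ({S | ∃ x : F, S = {V : Zar F | x ∈ V.1}} ∪ {S | ∃ y : F, S = {V : Zar F | y ∉ V.1}})

lemma isOpen_memSet (x : F) : IsOpen {V : Zar F | x ∈ V.1} :=
  TopologicalSpace.isOpen_generateFrom_of_mem (Or.inl ⟨x, rfl⟩)

lemma isOpen_notMemSet (y : F) : IsOpen {V : Zar F | y ∉ V.1} :=
  TopologicalSpace.isOpen_generateFrom_of_mem (Or.inr ⟨y, rfl⟩)

theorem stmt4 (X : Set (Zar F)) (hX : X.Nonempty) :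
    jSet X = {0} ↔ ∃ U ∈ closure X, mIdeal U ∩ aSet X = {0} := by
  constructor
  · intro hJ
    -- the family of sets with FIP
    set Sa : F → Set (Zar F) := fun a => {V ∈ X | a⁻¹ ∈ V.1} with hSa
    set 𝒮 : Set (Set (Zar F)) := insert X {S | ∃ a ∈ aSet X, a ≠ 0 ∧ S = Sa a} with h𝒮
    -- every Sa a for nonzero a ∈ A is nonempty
    have hSane : ∀ a ∈ aSet X, a ≠ 0 → (Sa a).Nonempty := by
      intro a haA ha0
      have : a ∉ jSet X := by rw [hJ]; simpa using ha0
      rw [jSet, mem_iInter₂] at this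
      push_neg at this
      obtain ⟨V, hVX, hVm⟩ := this
      have haV : a ∈ V.1 := mem_iInter₂.1 haA V hVX
      refine ⟨V, hVX, ?_⟩
      by_contra h
      exact hVm ⟨haV, Or.inr h⟩
    -- Sa a ⊆ X
    have hSaX : ∀ a : F, Sa a ⊆ X := fun a V hV => hV.1
    -- anti-multiplicativity: Sa (a*b) ⊆ Sa a for b ∈ A
    have hSmul : ∀ a b : F, a ∈ aSet X → b ∈ aSet X → a ≠ 0 → b ≠ 0 →
        Sa (a * b) ⊆ Sa a := by
      intro a b haA hbA ha0 hb0 V hV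
      refine ⟨hV.1, ?_⟩
      have hbV : b ∈ V.1 := mem_iInter₂.1 hbA V hV.1
      have : (a * b)⁻¹ * b ∈ V.1 := mul_mem hV.2 hbV
      rwa [mul_inv, mul_assoc, inv_mul_cancel₀ hb0, mul_one] at this
    -- finite intersection property
    have hFIP : ∀ t ⊆ 𝒮, t.Finite → (⋂₀ t).Nonempty := by
      intro t hts htf
      -- find a single a whose Sa is contained in all of t
      have key : ∃ a ∈ aSet X, a ≠ 0 ∧ Sa a ⊆ ⋂₀ t := by
        refine Set.Finite.induction_on_subset (motive := fun u _ => ∃ a ∈ aSet X, a ≠ 0 ∧ Sa a ⊆ ⋂₀ u)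
          t htf ?_ ?_
        · refine ⟨1, ?_, one_ne_zero, by simp⟩
          exact mem_iInter₂.2 fun V _ => one_mem V.1
        · rintro S t hStt - - ⟨a, haA, ha0, hsub⟩
          have hS : S ∈ 𝒮 := hts hStt
          rw [h𝒮] at hS
          rcases hS with hS | ⟨b, hbA, hb0, rfl⟩
          · subst hS
            exact ⟨a, haA, ha0, by
              rw [sInter_insert]
              exact subset_inter (hSaX a) hsub⟩
          · have habA : a * b ∈ aSet X := by
              refine mem_iInter₂.2 fun V hV => mul_mem ?_ ?_
              · exact mem_iInter₂.1 haA V hV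
              · exact mem_iInter₂.1 hbA V hV
            refine ⟨a * b, habA, mul_ne_zero ha0 hb0, ?_⟩
            rw [sInter_insert]
            refine subset_inter ?_ ((hSmul a b haA hbA ha0 hb0).trans hsub)
            rw [mul_comm]
            exact hSmul b a hbA haA hb0 ha0
      obtain ⟨a, haA, ha0, hsub⟩ := key
      exact (hSane a haA ha0).mono hsub
    -- get an ultrafilter
    have hne : (Filter.generate 𝒮).NeBot := Filter.generate_neBot_iff.2 hFIP
    obtain ⟨𝒰, h𝒰⟩ := Filter.exists_ultrafilter_le (Filter.generate 𝒮)
    have hmem𝒰 : ∀ S ∈ 𝒮, S ∈ 𝒰 := fun S hS =>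
      h𝒰 (Filter.mem_generate_of_mem hS)
    have hX𝒰 : X ∈ 𝒰 := hmem𝒰 X (mem_insert X _)
    -- define the limit valuation ring
    set Usub : Subring F :=
      { carrier := {t : F | {V : Zar F | t ∈ V.1} ∈ 𝒰}
        one_mem' := by
          have : {V : Zar F | (1:F) ∈ V.1} = univ := eq_univ_of_forall fun V => one_mem V.1
          simp only [mem_setOf_eq, this]; exact Filter.univ_mem
        zero_mem' := by
          have : {V : Zar F | (0:F) ∈ V.1} = univ := eq_univ_of_forall fun V => zero_mem V.1
          simp only [mem_setOf_eq, this]; exact Filter.univ_mem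
        mul_mem' := by
          intro a b ha hb
          refine Filter.mem_of_superset (Filter.inter_mem ha hb) ?_
          intro V hV
          exact show a * b ∈ V.1 from mul_mem hV.1 hV.2
        add_mem' := by
          intro a b ha hb
          refine Filter.mem_of_superset (Filter.inter_mem ha hb) ?_
          intro V hV
          exact show a + b ∈ V.1 from add_mem hV.1 hV.2
        neg_mem' := by
          intro a ha
          refine Filter.mem_of_superset ha ?_
          intro V hV
          exact show -a ∈ V.1 from neg_mem hV } with hUsub
    have hUval : IsValSubring F Usub := by
      intro t ht0
      have hcov : {V : Zar F | t ∈ V.1} ∪ {V : Zar F | t⁻¹ ∈ V.1} = univ :=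
        eq_univ_of_forall fun V => V.2 t ht0
      have : {V : Zar F | t ∈ V.1} ∪ {V : Zar F | t⁻¹ ∈ V.1} ∈ 𝒰 := by
        rw [hcov]; exact Filter.univ_mem
      exact Ultrafilter.union_mem_iff.1 this
    set U : Zar F := ⟨Usub, hUval⟩ with hU
    -- membership criterion
    have hUmem : ∀ t : F, t ∈ U.1 ↔ {V : Zar F | t ∈ V.1} ∈ 𝒰 := fun t => Iff.rfl
    -- every open set containing U is in the ultrafilter
    have hopen : ∀ o : Set (Zar F), IsOpen o → U ∈ o → o ∈ 𝒰 := by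
      intro o ho
      have ho' : TopologicalSpace.GenerateOpen
          ({S | ∃ x : F, S = {V : Zar F | x ∈ V.1}} ∪
           {S | ∃ y : F, S = {V : Zar F | y ∉ V.1}}) o := ho
      clear ho
      induction ho' with
      | basic s hs =>
        intro hUs
        rcases hs with ⟨x, rfl⟩ | ⟨y, rfl⟩
        · exact (hUmem x).1 hUs
        · have : {V : Zar F | y ∈ V.1} ∉ 𝒰 := fun h => hUs ((hUmem y).2 h)
          have := Ultrafilter.compl_mem_iff_notMem.2 this
          exact this
      | univ => intro _; exact Filter.univ_mem
      | inter s t _ _ ihs iht => intro hUst; exact Filter.inter_mem (ihs hUst.1) (iht hUst.2)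
      | sUnion S _ ih =>
        intro hUS
        obtain ⟨s, hsS, hUs⟩ := hUS
        exact Filter.mem_of_superset (ih s hsS hUs) (subset_sUnion_of_mem hsS)
    -- U is in the closure of X
    have hUcl : U ∈ closure X := by
      rw [mem_closure_iff]
      intro o hoo hUo
      have : o ∩ X ∈ 𝒰 := Filter.inter_mem (hopen o hoo hUo) hX𝒰
      exact Filter.nonempty_of_mem this
    refine ⟨U, hUcl, ?_⟩
    apply Subset.antisymm
    · rintro a ⟨⟨haU, ha⟩, haA⟩
      rcases ha with rfl | hainv
      · rfl
      by_contra ha0'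
      have ha0 : a ≠ 0 := fun h => ha0' (by simp [h])
      have hSa𝒰 : Sa a ∈ 𝒰 := hmem𝒰 _ (mem_insert_of_mem _ ⟨a, haA, ha0, rfl⟩)
      have : {V : Zar F | a⁻¹ ∈ V.1} ∈ 𝒰 :=
        Filter.mem_of_superset hSa𝒰 (fun V hV => hV.2)
      exact hainv ((hUmem a⁻¹).2 this)
    · rintro a (rfl : a = 0)
      refine ⟨⟨zero_mem _, Or.inl rfl⟩, ?_⟩
      exact mem_iInter₂.2 fun V _ => zero_mem V.1
  · rintro ⟨U, hUcl, hUm⟩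
    apply Subset.antisymm
    · intro x hx
      have hxA : x ∈ aSet X := by
        refine mem_iInter₂.2 fun V hV => ?_
        exact (mem_iInter₂.1 hx V hV).1
      rcases eq_or_ne x 0 with rfl | hx0
      · rfl
      -- show x ∈ mIdeal U
      have hxU : x ∈ U.1 := by
        by_contra h
        obtain ⟨W, hWo, hWX⟩ := mem_closure_iff.1 hUcl {V : Zar F | x ∉ V.1}
          (isOpen_notMemSet x) h
        exact hWo ((mem_iInter₂.1 hx W hWX).1)
      have hxinvU : x⁻¹ ∉ U.1 := by
        intro h
        obtain ⟨W, hWo, hWX⟩ := mem_closure_iff.1 hUcl {V : Zar F | x⁻¹ ∈ V.1}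
          (isOpen_memSet x⁻¹) h
        rcases (mem_iInter₂.1 hx W hWX).2 with h0 | hni
        · exact hx0 h0
        · exact hni hWo
      have : x ∈ mIdeal U ∩ aSet X := ⟨⟨hxU, Or.inr hxinvU⟩, hxA⟩
      rw [hUm] at this
      exact this
    · rintro x (rfl : x = 0)
      exact mem_iInter₂.2 fun V _ => ⟨zero_mem V.1, Or.inl rfl⟩
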